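/- Let Φ : 𝒫 → C(G, ℂ) be the map λ ↦ φ_λ, where 𝒫 carries the subspace topology of ℂ and C(G, ℂ) carries the compact-open topology (the topology of uniform convergence on compact subsets of G). Then Φ is a topological embedding: it is injective, continuous, and a homeomorphism onto its image. -/

import Mathlib

open Matrix Real Complex MeasureTheory Topology

noncomputable section

/-- The Lorentz form matrix η = diag(−1, 1, …, 1). -/
def lorentzEta (n : ℕ) : Matrix (Fin (n + 1)) (Fin (n + 1)) ℝ :=
  Matrix.diagonal fun i => if i = 0 then (-1 : ℝ) else 1

/-- `SO₀(1,n)`: matrices `g` with `gᵀ η g = η`, `det g = 1` and `g₀₀ ≥ 1`. -/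
def SOo (n : ℕ) : Set (Matrix (Fin (n + 1)) (Fin (n + 1)) ℝ) :=
  {g | gᵀ * lorentzEta n * g = lorentzEta n ∧ g.det = 1 ∧ 1 ≤ g 0 0}

/-- The inverse hyperbolic cosine. -/
def acosh (x : ℝ) : ℝ := Real.log (x + Real.sqrt (x ^ 2 - 1))

/-- The function `φ_λ(g) = exp((λ − ρ)·arccosh(g₀₀))` with `ρ = (n−1)/2`. -/
def phiM (n : ℕ) (l : ℂ) (g : Matrix (Fin (n + 1)) (Fin (n + 1)) ℝ) : ℂ :=
  Complex.exp ((l - ((n : ℂ) - 1) / 2) * (acosh (g 0 0) : ℝ))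

/-- The parameter space `𝒫 = {λ ∈ ℂ | (Im λ = 0 ∧ 0 < Re λ ≤ ρ) ∨ Re λ = 0}`. -/
def Pspace (ρ : ℝ) : Set ℂ :=
  {l | (l.im = 0 ∧ 0 < l.re ∧ l.re ≤ ρ) ∨ l.re = 0}

lemma phi_continuous (n : ℕ) (l : ℂ) :
    Continuous fun g : SOo n => phiM n l g.val := by
  have h00 : Continuous fun g : SOo n => g.val 0 0 :=
    (continuous_apply (0 : Fin (n + 1))).comp
      ((continuous_apply (0 : Fin (n + 1))).comp continuous_subtype_val)
  have hin : Continuous fun g : SOo n =>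
      g.val 0 0 + Real.sqrt ((g.val 0 0) ^ 2 - 1) :=
    h00.add (Real.continuous_sqrt.comp ((h00.pow 2).sub continuous_const))
  have hlog : Continuous fun g : SOo n => acosh (g.val 0 0) := by
    unfold acosh
    refine Real.continuousOn_log.comp_continuous hin fun g => ?_
    have h1 : (1 : ℝ) ≤ g.val 0 0 := g.2.2.2
    have hpos : (0 : ℝ) < g.val 0 0 + Real.sqrt ((g.val 0 0) ^ 2 - 1) := by
      nlinarith [Real.sqrt_nonneg ((g.val 0 0) ^ 2 - 1)]
    simpa using hpos.ne'
  unfold phiM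
  exact Complex.continuous_exp.comp
    (continuous_const.mul (Complex.continuous_ofReal.comp hlog))


def boost (n : ℕ) (t : ℝ) : Matrix (Fin (n + 1)) (Fin (n + 1)) ℝ :=
  fun i j =>
    Real.cosh t * (if i = 0 ∧ j = 0 ∨ i = 1 ∧ j = 1 then 1 else 0) +
      Real.sinh t * (if i = 0 ∧ j = 1 ∨ i = 1 ∧ j = 0 then 1 else 0) +
      (if i = j ∧ ¬i = 0 ∧ ¬i = 1 then 1 else 0)

lemma boost_continuous (n : ℕ) : Continuous fun t : ℝ => boost n t := by
  refine continuous_pi fun i => continuous_pi fun j => ?_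
  exact ((Real.continuous_cosh.mul continuous_const).add
    (Real.continuous_sinh.mul continuous_const)).add continuous_const

lemma acosh_cosh {t : ℝ} (ht : 0 ≤ t) : acosh (Real.cosh t) = t := by
  have h1 : Real.cosh t ^ 2 - 1 = Real.sinh t ^ 2 := by
    have := Real.cosh_sq_sub_sinh_sq t; linarith
  rw [acosh, h1, Real.sqrt_sq (Real.sinh_nonneg_iff.mpr ht), Real.cosh_add_sinh, Real.log_exp]

lemma boost_zero_zero (n : ℕ) (hn : 1 ≤ n) (t : ℝ) : boost n t 0 0 = Real.cosh t := by
  have h01 : (0 : Fin (n + 1)) ≠ 1 := by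
    rw [Fin.ne_iff_vne]; simp [Fin.val_one']; omega
  simp [boost, h01]

lemma boost_mem2 (t : ℝ) : boost 2 t ∈ SOo 2 := by
  refine ⟨?_, ?_, ?_⟩
  · ext i j
    fin_cases i <;> fin_cases j <;>
      simp (config := { decide := true }) [Matrix.mul_apply, boost, lorentzEta, Matrix.diagonal,
        Fin.sum_univ_succ] <;>
      nlinarith [Real.cosh_sq_sub_sinh_sq t]
  · rw [Matrix.det_fin_three]
    simp (config := { decide := true }) [boost] <;> nlinarith [Real.cosh_sq_sub_sinh_sq t]
  · simp [boost]

lemma boost_mem3 (t : ℝ) : boost 3 t ∈ SOo 3 := by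
  refine ⟨?_, ?_, ?_⟩
  · ext i j
    fin_cases i <;> fin_cases j <;>
      simp (config := { decide := true }) [Matrix.mul_apply, boost, lorentzEta, Matrix.diagonal,
        Fin.sum_univ_succ] <;>
      nlinarith [Real.cosh_sq_sub_sinh_sq t]
  · rw [Matrix.det_succ_row_zero]
    simp (config := { decide := true }) [Fin.sum_univ_succ, boost, Matrix.det_fin_three,
        Matrix.submatrix] <;>
      nlinarith [Real.cosh_sq_sub_sinh_sq t]
  · simp [boost]

lemma Pspace_re {ρ : ℝ} (hρ : 0 ≤ ρ) {l : ℂ} (hl : l ∈ Pspace ρ) :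
    0 ≤ l.re ∧ l.re ≤ ρ := by
  rcases hl with ⟨_, h1, h2⟩ | h
  · exact ⟨h1.le, h2⟩
  · rw [h]; exact ⟨le_refl _, hρ⟩

lemma exp_sub_one_lower {u : ℂ} (h : ‖u‖ ≤ 1) :
    ‖u‖ - ‖u‖ ^ 2 ≤ ‖Complex.exp u - 1‖ := by
  have h1 := Complex.norm_exp_sub_one_sub_id_le h
  have e : (Complex.exp u - 1) - (Complex.exp u - 1 - u) = u := by ring
  have h2 : ‖u‖
      ≤ ‖Complex.exp u - 1‖ + ‖Complex.exp u - 1 - u‖ := by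
    rw [← e]
    simpa using
      norm_sub_le (Complex.exp u - 1) (Complex.exp u - 1 - u)
  linarith

lemma factor_exp (z w : ℂ) :
    ‖Complex.exp z - Complex.exp w‖
      = Real.exp w.re * ‖Complex.exp (z - w) - 1‖ := by
  have h : Complex.exp z - Complex.exp w = Complex.exp w * (Complex.exp (z - w) - 1) := by
    rw [mul_sub, ← Complex.exp_add, mul_one]; ring_nf
  rw [h, norm_mul, Complex.norm_exp]

lemma key (ρ : ℝ) {z w : ℂ} (hz1 : -ρ ≤ z.re) (hz2 : z.re ≤ 0)
    (hw1 : -ρ ≤ w.re) (hw2 : w.re ≤ 0) :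
    ∃ t : ℝ, 0 ≤ t ∧ t ≤ 1 ∧
      Real.exp (-ρ) * min (‖z - w‖ / 2) 4⁻¹
        ≤ ‖Complex.exp (z * t) - Complex.exp (w * t)‖ := by
  set d := ‖z - w‖ with hd
  have hd0 : 0 ≤ d := norm_nonneg _
  by_cases hsmall : d ≤ 1 / 2
  · refine ⟨1, zero_le_one, le_refl 1, ?_⟩
    rw [Complex.ofReal_one, mul_one, mul_one, factor_exp]
    have h1 : d - d ^ 2 ≤ ‖Complex.exp (z - w) - 1‖ :=
      exp_sub_one_lower (by rw [← hd]; linarith)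
    have h2 : Real.exp (-ρ) ≤ Real.exp w.re := Real.exp_le_exp.mpr hw1
    have h3 : min (d / 2) 4⁻¹ ≤ d / 2 := min_le_left _ _
    calc Real.exp (-ρ) * min (d / 2) 4⁻¹ ≤ Real.exp (-ρ) * (d - d ^ 2) :=
          mul_le_mul_of_nonneg_left (by nlinarith) (Real.exp_pos (-ρ)).le
      _ ≤ Real.exp w.re * (d - d ^ 2) :=
          mul_le_mul_of_nonneg_right h2 (by nlinarith)
      _ ≤ Real.exp w.re * ‖Complex.exp (z - w) - 1‖ :=
          mul_le_mul_of_nonneg_left h1 (Real.exp_pos w.re).le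
  · push_neg at hsmall
    have hdpos : 0 < d := by linarith
    set t : ℝ := 1 / (2 * d) with htdef
    have ht0 : 0 ≤ t := by positivity
    have ht1 : t ≤ 1 := by rw [htdef, div_le_one (by linarith)]; linarith
    refine ⟨t, ht0, ht1, ?_⟩
    have habs : ‖(z - w) * (t : ℂ)‖ = 1 / 2 := by
      rw [norm_mul, Complex.norm_real, Real.norm_eq_abs, ← hd, _root_.abs_of_nonneg ht0, htdef]
      field_simp
    have hfac : z * (t : ℂ) - w * (t : ℂ) = (z - w) * (t : ℂ) := by ring
    rw [factor_exp, hfac]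
    have h1 : (4 : ℝ)⁻¹ ≤ ‖Complex.exp ((z - w) * (t : ℂ)) - 1‖ := by
      have := exp_sub_one_lower (u := (z - w) * (t : ℂ)) (by rw [habs]; norm_num)
      rw [habs] at this; norm_num at this ⊢; linarith
    have hre : (w * (t : ℂ)).re = w.re * t := by simp
    have h2 : Real.exp (-ρ) ≤ Real.exp ((w * (t : ℂ)).re) := by
      rw [hre]; apply Real.exp_le_exp.mpr; nlinarith
    have h3 : min (d / 2) 4⁻¹ ≤ 4⁻¹ := min_le_right _ _
    calc Real.exp (-ρ) * min (d / 2) 4⁻¹ ≤ Real.exp (-ρ) * 4⁻¹ :=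
          mul_le_mul_of_nonneg_left h3 (Real.exp_pos (-ρ)).le
      _ ≤ Real.exp ((w * (t : ℂ)).re) * 4⁻¹ :=
          mul_le_mul_of_nonneg_right h2 (by norm_num)
      _ ≤ _ := mul_le_mul_of_nonneg_left h1 (Real.exp_pos ((w * (t : ℂ)).re)).le

lemma rhoc_eq (n : ℕ) : ((n : ℂ) - 1) / 2 = ((((n : ℝ) - 1) / 2 : ℝ) : ℂ) := by
  push_cast; ring

def Fmap (n : ℕ) (l : Pspace (((n : ℝ) - 1) / 2)) : C(unitInterval, ℂ) :=
  ⟨fun t => Complex.exp ((l.val - ((n : ℂ) - 1) / 2) * ((t : ℝ) : ℂ)),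
    Complex.continuous_exp.comp
      (continuous_const.mul (Complex.continuous_ofReal.comp continuous_subtype_val))⟩

lemma sub_rho_re (n : ℕ) (l : ℂ) :
    (l - ((n : ℂ) - 1) / 2).re = l.re - ((n : ℝ) - 1) / 2 := by
  rw [rhoc_eq, Complex.sub_re, Complex.ofReal_re]

lemma F_isEmbedding (n : ℕ) (hn : 1 ≤ n) : Topology.IsEmbedding (Fmap n) := by
  set ρ : ℝ := ((n : ℝ) - 1) / 2 with hρdef
  have hρ : 0 ≤ ρ := by
    rw [hρdef]
    have : (1 : ℝ) ≤ (n : ℝ) := by exact_mod_cast hn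
    linarith
  apply IsUniformEmbedding.isEmbedding
  rw [Metric.isUniformEmbedding_iff']
  constructor
  · intro ε hε
    refine ⟨min 1 (ε / 4), by positivity, ?_⟩
    intro a b hab
    have hd0 : (0 : ℝ) ≤ dist a b := dist_nonneg
    have habs : ‖a.val - b.val‖ = dist a b := by
      rw [Subtype.dist_eq, Complex.dist_eq]
    have hle : dist (Fmap n a) (Fmap n b) ≤ 2 * dist a b := by
      rw [ContinuousMap.dist_le (by positivity)]
      intro x
      have hx0 : (0 : ℝ) ≤ (x : ℝ) := x.2.1
      have hx1 : (x : ℝ) ≤ 1 := x.2.2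
      have heq : dist (Fmap n a x) (Fmap n b x)
          = Real.exp (((b.val - ((n : ℂ) - 1) / 2) * ((x : ℝ) : ℂ)).re) *
            ‖Complex.exp ((a.val - b.val) * ((x : ℝ) : ℂ)) - 1‖ := by
        rw [Complex.dist_eq]
        show ‖Complex.exp _ - Complex.exp _‖ = _
        rw [factor_exp]
        congr 2
        ring
      rw [heq]
      have h1 : Real.exp (((b.val - ((n : ℂ) - 1) / 2) * ((x : ℝ) : ℂ)).re) ≤ 1 := by
        apply Real.exp_le_one_iff.mpr
        have : ((b.val - ((n : ℂ) - 1) / 2) * ((x : ℝ) : ℂ)).re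
            = (b.val.re - ρ) * (x : ℝ) := by
          simp [Complex.mul_re, sub_rho_re, hρdef]
        rw [this]
        have hbre := (Pspace_re hρ b.2).2
        nlinarith
      have h2 : ‖(a.val - b.val) * ((x : ℝ) : ℂ)‖ ≤ dist a b := by
        rw [norm_mul, Complex.norm_real, Real.norm_eq_abs, _root_.abs_of_nonneg hx0, habs]
        nlinarith
      have h3 : ‖Complex.exp ((a.val - b.val) * ((x : ℝ) : ℂ)) - 1‖
          ≤ 2 * ‖(a.val - b.val) * ((x : ℝ) : ℂ)‖ := by
        apply Complex.norm_exp_sub_one_le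
        have : dist a b ≤ 1 := le_trans hab.le (min_le_left _ _)
        linarith
      have h4 : ‖Complex.exp ((a.val - b.val) * ((x : ℝ) : ℂ)) - 1‖
          ≤ 2 * dist a b := by linarith
      nlinarith [norm_nonneg (Complex.exp ((a.val - b.val) * ((x : ℝ) : ℂ)) - 1)]
    have : dist a b < ε / 4 := lt_of_lt_of_le hab (min_le_right _ _)
    linarith
  · intro δ hδ
    refine ⟨Real.exp (-ρ) * min (min δ 1 / 2) 4⁻¹, by positivity, ?_⟩
    intro a b hab
    by_contra hcon
    push_neg at hcon
    have habs : ‖a.val - b.val‖ = dist a b := by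
      rw [Subtype.dist_eq, Complex.dist_eq]
    have hza1 : -ρ ≤ (a.val - ((n : ℂ) - 1) / 2).re := by
      rw [sub_rho_re]; have := (Pspace_re hρ a.2).1; linarith [hρdef]
    have hza2 : (a.val - ((n : ℂ) - 1) / 2).re ≤ 0 := by
      rw [sub_rho_re]; have := (Pspace_re hρ a.2).2; linarith [hρdef]
    have hzb1 : -ρ ≤ (b.val - ((n : ℂ) - 1) / 2).re := by
      rw [sub_rho_re]; have := (Pspace_re hρ b.2).1; linarith [hρdef]
    have hzb2 : (b.val - ((n : ℂ) - 1) / 2).re ≤ 0 := by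
      rw [sub_rho_re]; have := (Pspace_re hρ b.2).2; linarith [hρdef]
    obtain ⟨t, ht0, ht1, hk⟩ := key ρ hza1 hza2 hzb1 hzb2
    have hdiff : (a.val - ((n : ℂ) - 1) / 2) - (b.val - ((n : ℂ) - 1) / 2)
        = a.val - b.val := by ring
    rw [hdiff] at hk
    set x : unitInterval := ⟨t, ht0, ht1⟩ with hx
    have hpt : ‖Complex.exp ((a.val - ((n : ℂ) - 1) / 2) * (t : ℂ))
          - Complex.exp ((b.val - ((n : ℂ) - 1) / 2) * (t : ℂ))‖
        = dist (Fmap n a x) (Fmap n b x) := by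
      rw [Complex.dist_eq]; rfl
    rw [hpt] at hk
    have hle : dist (Fmap n a x) (Fmap n b x) ≤ dist (Fmap n a) (Fmap n b) :=
      ContinuousMap.dist_apply_le_dist x
    have hmin : min (min δ 1 / 2) 4⁻¹ ≤ min (‖a.val - b.val‖ / 2) 4⁻¹ := by
      apply min_le_min _ (le_refl _)
      rw [habs]
      have : min δ 1 ≤ δ := min_le_left _ _
      linarith
    have : Real.exp (-ρ) * min (min δ 1 / 2) 4⁻¹
        ≤ Real.exp (-ρ) * min (‖a.val - b.val‖ / 2) 4⁻¹ :=
      mul_le_mul_of_nonneg_left hmin (Real.exp_pos _).le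
    linarith

lemma acosh_entry_continuous (n : ℕ) : Continuous fun g : SOo n => acosh (g.val 0 0) := by
  have h00 : Continuous fun g : SOo n => g.val 0 0 :=
    (continuous_apply (0 : Fin (n + 1))).comp
      ((continuous_apply (0 : Fin (n + 1))).comp continuous_subtype_val)
  have hin : Continuous fun g : SOo n =>
      g.val 0 0 + Real.sqrt ((g.val 0 0) ^ 2 - 1) :=
    h00.add (Real.continuous_sqrt.comp ((h00.pow 2).sub continuous_const))
  unfold acosh
  refine Real.continuousOn_log.comp_continuous hin fun g => ?_
  have h1 : (1 : ℝ) ≤ g.val 0 0 := g.2.2.2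
  have hpos : (0 : ℝ) < g.val 0 0 + Real.sqrt ((g.val 0 0) ^ 2 - 1) := by
    nlinarith [Real.sqrt_nonneg ((g.val 0 0) ^ 2 - 1)]
  simpa using hpos.ne'

/-- The map `Φ : 𝒫 → C(G, ℂ)`, `λ ↦ φ_λ`. -/
def Phi (n : ℕ) (l : Pspace (((n : ℝ) - 1) / 2)) : C(SOo n, ℂ) :=
  ⟨fun g => phiM n l.val g.val, phi_continuous n l.val⟩

lemma Phi_cont (n : ℕ) : Continuous (Phi n) := by
  apply ContinuousMap.continuous_of_continuous_uncurry
  show Continuous fun p : Pspace (((n : ℝ) - 1) / 2) × SOo n =>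
    Complex.exp ((p.1.val - ((n : ℂ) - 1) / 2) * ((acosh (p.2.val 0 0) : ℝ) : ℂ))
  exact Complex.continuous_exp.comp
    (((continuous_subtype_val.comp continuous_fst).sub continuous_const).mul
      (Complex.continuous_ofReal.comp ((acosh_entry_continuous n).comp continuous_snd)))

/-- `Φ : 𝒫 → C(G, ℂ)` is a topological embedding, where `𝒫 ⊆ ℂ` carries the subspace
topology and `C(G, ℂ)` the compact-open topology. -/
theorem statement0 (n : ℕ) (hn : n = 2 ∨ n = 3) :
    Topology.IsEmbedding (Phi n) := by
  have hn1 : 1 ≤ n := by rcases hn with rfl | rfl <;> norm_num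
  have hmem : ∀ t : ℝ, boost n t ∈ SOo n := by
    rcases hn with rfl | rfl
    · exact boost_mem2
    · exact boost_mem3
  set γ : C(unitInterval, SOo n) :=
    ⟨fun t => ⟨boost n (t : ℝ), hmem (t : ℝ)⟩,
      Continuous.subtype_mk ((boost_continuous n).comp continuous_subtype_val) _⟩ with hγ
  have hcomp : (fun f : C(SOo n, ℂ) => f.comp γ) ∘ Phi n = Fmap n := by
    funext l
    ext x
    show phiM n l.val (boost n (x : ℝ)) = _
    rw [phiM, boost_zero_zero n hn1, acosh_cosh x.2.1]
    rfl
  refine Topology.IsEmbedding.of_comp (Phi_cont n) (ContinuousMap.continuous_precomp γ) ?_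
  rw [hcomp]
  exact F_isEmbedding n hn1

end
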